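/- For α ∈ (1,2), δ > 0, and t with δ^κ ≤ t (κ = 2α/(3α-1)): ∫_0^{t-δ^κ} ∫_ℝ (e^{-(t+δ-r)|ξ|^α} - e^{-(t-r)|ξ|^α})^2 dξ dr ≤ ∫_ℝ (δ²|ξ|^α/2) e^{-2δ^κ|ξ|^α} dξ ≤ C_α δ^{4(α-1)/(3α-1)} for a constant C_α depending only on α. -/

import Mathlib

open MeasureTheory Real

lemma aux_integrable {s p b : ℝ} (hs : 0 ≤ s) (hp : 1 ≤ p) (hb : 0 < b) :
    Integrable (fun x : ℝ => |x| ^ s * Real.exp (-b * |x| ^ p)) := by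
  have key : IntegrableOn (fun x : ℝ => |x| ^ s * Real.exp (-b * |x| ^ p)) (Set.Ioi 0) := by
    refine (integrableOn_rpow_mul_exp_neg_mul_rpow (s := s) (p := p) (b := b)
      (by linarith) (by linarith) hb).congr_fun (fun x hx => ?_) measurableSet_Ioi
    rw [abs_of_pos hx]
  rw [← integrableOn_univ, ← Set.Iio_union_Ici (a := (0:ℝ)), integrableOn_union,
    integrableOn_Ici_iff_integrableOn_Ioi]
  refine ⟨?_, key⟩
  rw [← (Measure.measurePreserving_neg (volume : Measure ℝ)).integrableOn_comp_preimage
      (Homeomorph.neg ℝ).measurableEmbedding]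
  simpa only [Function.comp_def, abs_neg, Set.neg_preimage, Set.neg_Iio, neg_zero] using key

set_option maxHeartbeats 1000000 in
/-- For `α ∈ (1,2)`, `κ = 2α/(3α-1)`, there is a constant `C_α > 0` such that
for all `δ ∈ (0,1]` and `t` with `δ^κ ≤ t`:
`∫_0^(t-δ^κ) ∫_ℝ (e^(-(t+δ-r)|ξ|^α) - e^(-(t-r)|ξ|^α))² dξ dr
  ≤ ∫_ℝ (δ²|ξ|^α/2) e^(-2δ^κ|ξ|^α) dξ ≤ C_α δ^(4(α-1)/(3α-1))`. -/
theorem kernel_difference_integral_bound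
    (α κ : ℝ) (hα1 : 1 < α) (hα2 : α < 2) (hκ : κ = 2 * α / (3 * α - 1)) :
    ∃ C : ℝ, 0 < C ∧ ∀ δ t : ℝ, 0 < δ → δ ≤ 1 → δ ^ κ ≤ t →
      (∫ r in Set.Ioc (0 : ℝ) (t - δ ^ κ), ∫ ξ : ℝ,
          (Real.exp (-(t + δ - r) * |ξ| ^ α) - Real.exp (-(t - r) * |ξ| ^ α)) ^ 2)
        ≤ (∫ ξ : ℝ, (δ ^ 2 * |ξ| ^ α / 2) * Real.exp (-2 * δ ^ κ * |ξ| ^ α)) ∧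
      (∫ ξ : ℝ, (δ ^ 2 * |ξ| ^ α / 2) * Real.exp (-2 * δ ^ κ * |ξ| ^ α))
        ≤ C * δ ^ (4 * (α - 1) / (3 * α - 1)) := by
  have hα0 : (0:ℝ) < α := by linarith
  have h3α : (0:ℝ) < 3 * α - 1 := by linarith
  set g : ℝ → ℝ := fun u => |u| ^ α * Real.exp (-(2:ℝ) * |u| ^ α) with hg
  have hgint : Integrable g := aux_integrable hα0.le hα1.le two_pos
  have hgnn : 0 ≤ ∫ u, g u := by
    refine integral_nonneg fun u => ?_
    exact mul_nonneg (Real.rpow_nonneg (abs_nonneg u) α) (Real.exp_pos _).le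
  refine ⟨(∫ u, g u) / 2 + 1, by linarith, fun δ t hδ hδ1 hδt => ?_⟩
  have hdk : 0 < δ ^ κ := Real.rpow_pos_of_pos hδ κ
  have hT : 0 ≤ t - δ ^ κ := by linarith
  have hcontα : Continuous fun ξ : ℝ => |ξ| ^ α :=
    continuous_abs.rpow_const fun x => Or.inr hα0.le
  have hcont2α : Continuous fun ξ : ℝ => |ξ| ^ (2 * α) :=
    continuous_abs.rpow_const fun x => Or.inr (by positivity)
  -- the middle integrand is integrable
  have hmidint : Integrable (fun ξ : ℝ =>
      (δ ^ 2 * |ξ| ^ α / 2) * Real.exp (-2 * δ ^ κ * |ξ| ^ α)) := by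
    have h := (aux_integrable hα0.le hα1.le (by positivity : (0:ℝ) < 2 * δ ^ κ)).const_mul
      (δ ^ 2 / 2)
    refine h.congr (Filter.Eventually.of_forall fun ξ => ?_)
    dsimp only
    rw [show -(2 * δ ^ κ) * |ξ| ^ α = -2 * δ ^ κ * |ξ| ^ α by ring]
    ring
  constructor
  · -- first inequality
    set T := t - δ ^ κ with hTdef
    set F : ℝ → ℝ → ℝ := fun r ξ =>
      (Real.exp (-(t + δ - r) * |ξ| ^ α) - Real.exp (-(t - r) * |ξ| ^ α)) ^ 2 with hF
    set H : ℝ → ℝ → ℝ := fun r ξ =>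
      δ ^ 2 * |ξ| ^ (2 * α) * Real.exp (-2 * (t - r) * |ξ| ^ α) with hH
    set G2 : ℝ → ℝ := fun ξ =>
      δ ^ 2 * (|ξ| ^ (2 * α) * Real.exp (-(2 * δ ^ κ) * |ξ| ^ α)) with hG2def
    have hG2 : Integrable G2 :=
      (aux_integrable (by positivity) hα1.le (by positivity : (0:ℝ) < 2 * δ ^ κ)).const_mul _
    have hc2 : ∀ ξ : ℝ, |ξ| ^ (2 * α) = (|ξ| ^ α) ^ 2 := fun ξ => by
      rw [mul_comm, Real.rpow_mul (abs_nonneg ξ), Real.rpow_two]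
    -- pointwise bound F ≤ H
    have hFH : ∀ r ∈ Set.Ioc (0:ℝ) T, ∀ ξ : ℝ, F r ξ ≤ H r ξ := by
      intro r _ ξ
      set c := |ξ| ^ α with hc
      have hcnn : 0 ≤ c := Real.rpow_nonneg (abs_nonneg ξ) α
      have e1 : Real.exp (-(t + δ - r) * c) = Real.exp (-(t - r) * c) * Real.exp (-(δ * c)) := by
        rw [← Real.exp_add]; congr 1; ring
      have e2 : Real.exp (-(δ * c)) ≤ 1 := by
        rw [Real.exp_le_one_iff]
        nlinarith
      have e3 : 1 - Real.exp (-(δ * c)) ≤ δ * c := by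
        nlinarith [Real.add_one_le_exp (-(δ * c))]
      have e4 : Real.exp (-2 * (t - r) * c) = Real.exp (-(t - r) * c) ^ 2 := by
        rw [sq, ← Real.exp_add]; congr 1; ring
      have e5 : (1 - Real.exp (-(δ * c))) ^ 2 ≤ (δ * c) ^ 2 :=
        pow_le_pow_left₀ (by linarith) e3 2
      have key : F r ξ = Real.exp (-(t - r) * c) ^ 2 * (1 - Real.exp (-(δ * c))) ^ 2 := by
        show (Real.exp (-(t + δ - r) * c) - Real.exp (-(t - r) * c)) ^ 2 = _; rw [e1]; ring
      rw [key]
      have : Real.exp (-(t - r) * c) ^ 2 * (1 - Real.exp (-(δ * c))) ^ 2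
          ≤ Real.exp (-(t - r) * c) ^ 2 * (δ * c) ^ 2 :=
        mul_le_mul_of_nonneg_left e5 (sq_nonneg _)
      refine this.trans_eq ?_
      simp only [hH, hc2 ξ, ← hc, e4]; ring
    have hFnn : ∀ r ξ : ℝ, 0 ≤ F r ξ := fun r ξ => sq_nonneg _
    -- pointwise bound H ≤ G2 on the strip
    have hHG : ∀ r ∈ Set.Ioc (0:ℝ) T, ∀ ξ : ℝ, H r ξ ≤ G2 ξ := by
      intro r hr ξ
      have hrT : r ≤ T := hr.2
      have : Real.exp (-2 * (t - r) * |ξ| ^ α) ≤ Real.exp (-(2 * δ ^ κ) * |ξ| ^ α) := by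
        apply Real.exp_le_exp.mpr
        have hcnn : 0 ≤ |ξ| ^ α := Real.rpow_nonneg (abs_nonneg ξ) α
        nlinarith [hr.2, hT]
      calc H r ξ ≤ δ ^ 2 * |ξ| ^ (2 * α) * Real.exp (-(2 * δ ^ κ) * |ξ| ^ α) := by
            exact mul_le_mul_of_nonneg_left this (by positivity)
        _ = G2 ξ := by rw [hG2def]; ring
    have hHnn : ∀ r ξ : ℝ, 0 ≤ H r ξ := fun r ξ => by positivity
    -- integrability of F r and H r
    have hcontF : ∀ r : ℝ, Continuous (F r) := by
      intro r
      apply Continuous.pow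
      exact ((continuous_const.mul hcontα).rexp).sub ((continuous_const.mul hcontα).rexp)
    have hFint : ∀ r ∈ Set.Ioc (0:ℝ) T, Integrable (F r) := by
      intro r hr
      refine hG2.mono' (hcontF r).aestronglyMeasurable
        (Filter.Eventually.of_forall fun ξ => ?_)
      rw [Real.norm_eq_abs, abs_of_nonneg (hFnn r ξ)]
      exact (hFH r hr ξ).trans (hHG r hr ξ)
    have hHint : ∀ r ∈ Set.Ioc (0:ℝ) T, Integrable (H r) := by
      intro r hr
      have htr : 0 < 2 * (t - r) := by
        have := hr.2; simp only [hTdef] at this; nlinarith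
      have h := (aux_integrable (by positivity : (0:ℝ) ≤ 2 * α) hα1.le htr).const_mul (δ ^ 2)
      refine h.congr (Filter.Eventually.of_forall fun ξ => ?_)
      dsimp only
      rw [show -(2 * (t - r)) * |ξ| ^ α = -2 * (t - r) * |ξ| ^ α by ring]
      simp only [hH]; ring
    -- product integrability of H
    have hcontH : Continuous (Function.uncurry H) := by
      apply Continuous.mul
      · exact continuous_const.mul (hcont2α.comp continuous_snd)
      · exact (((continuous_const.mul (continuous_const.sub continuous_fst)).mul
          (hcontα.comp continuous_snd))).rexp
    haveI : IsFiniteMeasure (volume.restrict (Set.Ioc (0:ℝ) T)) := by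
      constructor
      rw [Measure.restrict_apply_univ, Real.volume_Ioc]
      exact ENNReal.ofReal_lt_top
    have hdom : Integrable (fun z : ℝ × ℝ => G2 z.2)
        ((volume.restrict (Set.Ioc (0:ℝ) T)).prod volume) := by
      have h := Integrable.mul_prod (integrable_const (1:ℝ)
        (μ := volume.restrict (Set.Ioc (0:ℝ) T))) hG2
      simpa using h
    have hprodrw : (volume.restrict (Set.Ioc (0:ℝ) T)).prod (volume : Measure ℝ)
        = ((volume : Measure ℝ).prod volume).restrict (Set.Ioc (0:ℝ) T ×ˢ Set.univ) := by
      rw [← Measure.prod_restrict, Measure.restrict_univ]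
    have hHprod : Integrable (Function.uncurry H)
        ((volume.restrict (Set.Ioc (0:ℝ) T)).prod volume) := by
      refine hdom.mono' hcontH.aestronglyMeasurable ?_
      rw [hprodrw]
      filter_upwards [ae_restrict_mem (measurableSet_Ioc.prod MeasurableSet.univ)] with z hz
      have hzz : Function.uncurry H z = H z.1 z.2 := rfl
      rw [hzz, Real.norm_eq_abs, abs_of_nonneg (hHnn z.1 z.2)]
      exact hHG z.1 hz.1 z.2
    -- r ↦ ∫ ξ, F r ξ is integrable on Ioc 0 T
    have hcontF2 : Continuous (Function.uncurry F) := by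
      apply Continuous.pow
      exact ((((continuous_const.sub continuous_fst).neg.mul
          (hcontα.comp continuous_snd)).rexp).sub
        (((continuous_const.sub continuous_fst).neg.mul
          (hcontα.comp continuous_snd)).rexp))
    have hFrmeas : StronglyMeasurable fun r : ℝ => ∫ ξ : ℝ, F r ξ :=
      MeasureTheory.StronglyMeasurable.integral_prod_right hcontF2.stronglyMeasurable
    have hFrint : IntegrableOn (fun r : ℝ => ∫ ξ : ℝ, F r ξ) (Set.Ioc 0 T) := by
      refine Integrable.mono' (integrable_const (∫ ξ, G2 ξ)) hFrmeas.aestronglyMeasurable ?_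
      filter_upwards [ae_restrict_mem measurableSet_Ioc] with r hr
      have h1 : ∫ ξ : ℝ, F r ξ ≤ ∫ ξ, G2 ξ :=
        integral_mono (hFint r hr) hG2 fun ξ => (hFH r hr ξ).trans (hHG r hr ξ)
      have h2 : 0 ≤ ∫ ξ : ℝ, F r ξ := integral_nonneg (hFnn r)
      rw [Real.norm_eq_abs, abs_of_nonneg h2]
      exact h1
    have hHrint : IntegrableOn (fun r : ℝ => ∫ ξ : ℝ, H r ξ) (Set.Ioc 0 T) :=
      hHprod.integral_prod_left
    -- step 1 : monotonicity in the inner integral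
    have step1 : (∫ r in Set.Ioc (0:ℝ) T, ∫ ξ : ℝ, F r ξ)
        ≤ ∫ r in Set.Ioc (0:ℝ) T, ∫ ξ : ℝ, H r ξ := by
      refine setIntegral_mono_on hFrint hHrint measurableSet_Ioc fun r hr => ?_
      exact integral_mono (hFint r hr) (hHint r hr) (hFH r hr)
    -- step 2 : Fubini
    have step2 : (∫ r in Set.Ioc (0:ℝ) T, ∫ ξ : ℝ, H r ξ)
        = ∫ ξ : ℝ, ∫ r in Set.Ioc (0:ℝ) T, H r ξ :=
      integral_integral_swap hHprod
    -- step 3 : bound the r-integral pointwise in ξ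
    have step3 : (∫ ξ : ℝ, ∫ r in Set.Ioc (0:ℝ) T, H r ξ)
        ≤ ∫ ξ : ℝ, (δ ^ 2 * |ξ| ^ α / 2) * Real.exp (-2 * δ ^ κ * |ξ| ^ α) := by
      refine integral_mono hHprod.integral_prod_right hmidint fun ξ => ?_
      rcases eq_or_ne ξ 0 with rfl | hξ
      · have : ∀ r : ℝ, H r 0 = 0 := by
          intro r
          simp [hH, Real.zero_rpow (by positivity : 2 * α ≠ 0)]
        simp [this, Real.zero_rpow hα0.ne']
      · set c := |ξ| ^ α with hc
        have hcpos : 0 < c := Real.rpow_pos_of_pos (abs_pos.mpr hξ) α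
        have hconst : (∫ r in Set.Ioc (0:ℝ) T, H r ξ)
            = δ ^ 2 * |ξ| ^ (2 * α) * ∫ r in Set.Ioc (0:ℝ) T, Real.exp (-2 * (t - r) * c) := by
          simp only [hH, ← hc]
          rw [MeasureTheory.integral_const_mul]
        have hid : ∀ r : ℝ, Real.exp (-2 * (t - r) * c)
            = Real.exp (-2 * t * c) * Real.exp (2 * c * r) := by
          intro r; rw [← Real.exp_add]; congr 1; ring
        have hJ : (∫ r in Set.Ioc (0:ℝ) T, Real.exp (-2 * (t - r) * c))
            ≤ Real.exp (-2 * δ ^ κ * c) / (2 * c) := by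
          rw [← _root_.intervalIntegral.integral_of_le hT]
          have h2c : (2 * c) ≠ 0 := by positivity
          have hval : (∫ r in (0:ℝ)..T, Real.exp (-2 * (t - r) * c))
              = Real.exp (-2 * t * c) * ((2 * c)⁻¹ * (Real.exp (2 * c * T) - 1)) := by
            simp_rw [hid]
            rw [_root_.intervalIntegral.integral_const_mul]
            congr 1
            rw [_root_.intervalIntegral.integral_comp_mul_left Real.exp h2c,
              _root_.integral_exp, mul_zero, Real.exp_zero, smul_eq_mul]
          rw [hval]
          have hA := Real.exp_pos (-2 * t * c)
          have hB := Real.exp_pos (2 * c * T)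
          have hAB : Real.exp (-2 * t * c) * Real.exp (2 * c * T)
              = Real.exp (-2 * δ ^ κ * c) := by
            rw [← Real.exp_add]; congr 1; rw [hTdef]; ring
          rw [div_eq_mul_inv]
          have hinv : (0:ℝ) < (2 * c)⁻¹ := by positivity
          nlinarith [mul_pos hA hinv]
        rw [hconst]
        have hfin : δ ^ 2 * |ξ| ^ (2 * α) * (Real.exp (-2 * δ ^ κ * c) / (2 * c))
            = δ ^ 2 * c / 2 * Real.exp (-2 * δ ^ κ * c) := by
          rw [hc2 ξ, ← hc]
          field_simp
        calc δ ^ 2 * |ξ| ^ (2 * α) * (∫ r in Set.Ioc (0:ℝ) T, Real.exp (-2 * (t - r) * c))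
            ≤ δ ^ 2 * |ξ| ^ (2 * α) * (Real.exp (-2 * δ ^ κ * c) / (2 * c)) :=
              mul_le_mul_of_nonneg_left hJ (by positivity)
          _ = δ ^ 2 * c / 2 * Real.exp (-2 * δ ^ κ * c) := hfin
    calc (∫ r in Set.Ioc (0:ℝ) T, ∫ ξ : ℝ, F r ξ)
        ≤ ∫ r in Set.Ioc (0:ℝ) T, ∫ ξ : ℝ, H r ξ := step1
      _ = ∫ ξ : ℝ, ∫ r in Set.Ioc (0:ℝ) T, H r ξ := step2
      _ ≤ _ := step3
  · -- second inequality
    set a := δ ^ (κ / α) with hadef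
    have ha : 0 < a := Real.rpow_pos_of_pos hδ _
    have haα : a ^ α = δ ^ κ := by
      rw [hadef, ← Real.rpow_mul hδ.le, div_mul_cancel₀ κ hα0.ne']
    have hptwise : ∀ ξ : ℝ, (δ ^ 2 * |ξ| ^ α / 2) * Real.exp (-2 * δ ^ κ * |ξ| ^ α)
        = (δ ^ 2 / (2 * δ ^ κ)) * g (a * ξ) := by
      intro ξ
      have habs : |a * ξ| ^ α = δ ^ κ * |ξ| ^ α := by
        rw [abs_mul, Real.mul_rpow (abs_nonneg a) (abs_nonneg ξ), abs_of_pos ha, haα]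
      simp only [hg, habs]
      rw [show -(2:ℝ) * (δ ^ κ * |ξ| ^ α) = -2 * δ ^ κ * |ξ| ^ α by ring]
      field_simp
    have hmid : (∫ ξ : ℝ, (δ ^ 2 * |ξ| ^ α / 2) * Real.exp (-2 * δ ^ κ * |ξ| ^ α))
        = (δ ^ 2 / (2 * δ ^ κ)) * (a⁻¹ * ∫ u, g u) := by
      simp_rw [hptwise]
      rw [MeasureTheory.integral_const_mul, Measure.integral_comp_mul_left g a,
        abs_of_pos (inv_pos.mpr ha), smul_eq_mul]
    rw [hmid]
    have hpow : δ ^ 2 / (2 * δ ^ κ) * a⁻¹ = δ ^ (4 * (α - 1) / (3 * α - 1)) / 2 := by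
      have h1 : (δ:ℝ) ^ (2:ℕ) = δ ^ ((2:ℝ)) := by
        rw [← Real.rpow_natCast δ 2]; norm_num
      have h2 : δ ^ ((4:ℝ) * (α - 1) / (3 * α - 1)) = δ ^ ((2:ℝ)) / (δ ^ κ * a) := by
        rw [hadef, ← Real.rpow_add hδ, ← Real.rpow_sub hδ]
        congr 1
        rw [hκ]
        have h3α' : 3 * α - 1 ≠ 0 := h3α.ne'
        field_simp
        linear_combination 2 * mul_inv_cancel₀ h3α'
      rw [h1, h2]
      have hκ0 : δ ^ κ ≠ 0 := hdk.ne'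
      field_simp
    have hfinal : δ ^ 2 / (2 * δ ^ κ) * (a⁻¹ * ∫ u, g u)
        = (∫ u, g u) / 2 * δ ^ (4 * (α - 1) / (3 * α - 1)) := by
      rw [← mul_assoc, hpow]; ring
    rw [hfinal]
    have hδe : 0 < δ ^ (4 * (α - 1) / (3 * α - 1)) := Real.rpow_pos_of_pos hδ _
    have : (∫ u, g u) / 2 ≤ (∫ u, g u) / 2 + 1 := by linarith
    exact mul_le_mul_of_nonneg_right this hδe.le
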